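/- Let n₁, n₂ be natural numbers and let M be a complex positive semidefinite matrix of size (n₁+n₂)×(n₁+n₂) written in block form M = fromBlocks M_a M_ab (M_abᴴ) M_b, where M_a is n₁×n₁, M_ab is n₁×n₂, and M_b is n₂×n₂. Suppose R_a is an n₁×n₁ complex matrix with M_a = R_aᴴ ⬝ R_a. Then there exist an n₁×n₂ complex matrix R_ab and an upper triangular n₂×n₂ complex matrix R_b such that, setting R = fromBlocks R_a R_ab 0 R_b, one has M = Rᴴ ⬝ R. (In words: any given Gram factorization of the top-left block of a positive semidefinite matrix can be completed to a block upper triangular Gram factorization of the whole matrix.) -/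

import Mathlib

open Matrix
open scoped ComplexOrder

theorem factor_through {K V W U : Type*} [Field K] [AddCommGroup V] [Module K V]
    [AddCommGroup W] [Module K W] [AddCommGroup U] [Module K U]
    (f : V →ₗ[K] W) (g : V →ₗ[K] U) (h : LinearMap.ker f ≤ LinearMap.ker g) :
    ∃ T : W →ₗ[K] U, g = T ∘ₗ f := by
  let e := f.quotKerEquivRange
  let gbar : (V ⧸ LinearMap.ker f) →ₗ[K] U := (LinearMap.ker f).liftQ g h
  let φ : (LinearMap.range f) →ₗ[K] U := gbar ∘ₗ (e.symm : LinearMap.range f →ₗ[K] _)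
  obtain ⟨T, hT⟩ := φ.exists_extend
  refine ⟨T, ?_⟩
  ext v
  have h1 : e (Submodule.Quotient.mk v) = ⟨f v, LinearMap.mem_range_self f v⟩ :=
    Subtype.ext (f.quotKerEquivRange_apply_mk v)
  have h2 : e.symm ⟨f v, LinearMap.mem_range_self f v⟩ = Submodule.Quotient.mk v := by
    rw [← h1]; exact e.symm_apply_apply _
  have h3 : T (f v) = φ ⟨f v, LinearMap.mem_range_self f v⟩ := by
    have h4 := LinearMap.congr_fun hT (⟨f v, LinearMap.mem_range_self f v⟩ : LinearMap.range f)
    simpa using h4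
  simp only [LinearMap.comp_apply, h3, φ, LinearMap.coe_comp, Function.comp_apply,
    LinearEquiv.coe_coe, h2]
  exact (Submodule.liftQ_apply _ g v).symm

theorem exists_left_factor {m n p : ℕ} (A : Matrix (Fin n) (Fin p) ℂ)
    (G : Matrix (Fin m) (Fin p) ℂ)
    (h : ∀ x, A *ᵥ x = 0 → G *ᵥ x = 0) : ∃ H : Matrix (Fin m) (Fin n) ℂ, G = H * A := by
  obtain ⟨T, hT⟩ := factor_through (Matrix.toLin' A) (Matrix.toLin' G) (by
    intro x hx
    rw [LinearMap.mem_ker] at *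
    rw [Matrix.toLin'_apply] at *
    exact h x hx)
  refine ⟨LinearMap.toMatrix' T, ?_⟩
  have := congrArg LinearMap.toMatrix' hT
  rwa [LinearMap.toMatrix'_comp, LinearMap.toMatrix'_toLin', LinearMap.toMatrix'_toLin'] at this


theorem dot_helper {ι : Type*} [Fintype ι] (v w : ι → ℂ)
    (h : star w ⬝ᵥ (v - w) = 0) : 0 ≤ star v ⬝ᵥ v - star w ⬝ᵥ w := by
  have h' : star (v - w) ⬝ᵥ w = 0 := by
    rw [star_dotProduct, h, star_zero]
  have expand : star v ⬝ᵥ v = star w ⬝ᵥ w + star (v - w) ⬝ᵥ (v - w) := by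
    simp only [dotProduct_sub, sub_dotProduct, star_sub] at h h' ⊢
    linear_combination h + h'
  rw [expand]
  simpa using dotProduct_star_self_nonneg (v - w)

theorem core_completion {n₁ n₂ : ℕ}
    (M_a : Matrix (Fin n₁) (Fin n₁) ℂ) (M_ab : Matrix (Fin n₁) (Fin n₂) ℂ)
    (M_b : Matrix (Fin n₂) (Fin n₂) ℂ)
    (hM : (Matrix.fromBlocks M_a M_ab M_abᴴ M_b).PosSemidef)
    (R_a : Matrix (Fin n₁) (Fin n₁) ℂ) (hRa : M_a = R_aᴴ * R_a) :
    ∃ (R_ab : Matrix (Fin n₁) (Fin n₂) ℂ) (S : Matrix (Fin n₂) (Fin n₂) ℂ),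
      M_ab = R_aᴴ * R_ab ∧ S.PosSemidef ∧ M_b = R_abᴴ * R_ab + S := by
  open scoped MatrixOrder in
  obtain ⟨B, hB⟩ := CStarAlgebra.nonneg_iff_eq_star_mul_self.mp hM.nonneg
  rw [star_eq_conjTranspose] at hB
  set B₁ : Matrix (Fin n₁ ⊕ Fin n₂) (Fin n₁) ℂ := B.submatrix id Sum.inl with hB₁def
  set B₂ : Matrix (Fin n₁ ⊕ Fin n₂) (Fin n₂) ℂ := B.submatrix id Sum.inr with hB₂def
  have hent : ∀ i j, (Matrix.fromBlocks M_a M_ab M_abᴴ M_b) i j = (Bᴴ * B) i j := by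
    intro i j; rw [hB]
  have hMa : M_a = B₁ᴴ * B₁ := by
    ext i j
    have := hent (Sum.inl i) (Sum.inl j)
    simpa [Matrix.mul_apply, Matrix.conjTranspose_apply, hB₁def] using this
  have hMab : M_ab = B₁ᴴ * B₂ := by
    ext i j
    have := hent (Sum.inl i) (Sum.inr j)
    simpa [Matrix.mul_apply, Matrix.conjTranspose_apply, hB₁def, hB₂def] using this
  have hMb : M_b = B₂ᴴ * B₂ := by
    ext i j
    have := hent (Sum.inr i) (Sum.inr j)
    simpa [Matrix.mul_apply, Matrix.conjTranspose_apply, hB₂def] using this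
  have hMaH : M_aᴴ = M_a := by rw [hMa, Matrix.conjTranspose_mul, Matrix.conjTranspose_conjTranspose]
  -- kernel inclusion
  have hker : ∀ x, M_a *ᵥ x = 0 → M_abᴴ *ᵥ x = 0 := by
    intro x hx
    have hdot : star x ⬝ᵥ (M_a *ᵥ x) = 0 := by rw [hx, dotProduct_zero]
    have hB1x : B₁ *ᵥ x = 0 := by
      rw [hMa, ← Matrix.mulVec_mulVec, Matrix.dotProduct_mulVec, Matrix.vecMul_conjTranspose,
        star_star, dotProduct_star_self_eq_zero] at hdot
      exact hdot
    have : M_abᴴ = B₂ᴴ * B₁ := by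
      rw [hMab, Matrix.conjTranspose_mul, Matrix.conjTranspose_conjTranspose]
    rw [this, ← Matrix.mulVec_mulVec, hB1x, Matrix.mulVec_zero]
  obtain ⟨H, hH⟩ := exists_left_factor M_a M_abᴴ hker
  set Y : Matrix (Fin n₁) (Fin n₂) ℂ := Hᴴ with hYdef
  have hY : M_a * Y = M_ab := by
    have : M_ab = (M_abᴴ)ᴴ := (Matrix.conjTranspose_conjTranspose _).symm
    rw [this, hH, Matrix.conjTranspose_mul, hMaH]
  refine ⟨R_a * Y, M_b - (R_a * Y)ᴴ * (R_a * Y), ?_, Matrix.PosSemidef.of_dotProduct_mulVec_nonneg ?_ ?_, by abel⟩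
  · rw [← Matrix.mul_assoc, ← hRa, hY]
  · -- Hermitian
    show (M_b - (R_a * Y)ᴴ * (R_a * Y))ᴴ = _
    rw [Matrix.conjTranspose_sub, Matrix.conjTranspose_mul,
      Matrix.conjTranspose_conjTranspose, hMb, Matrix.conjTranspose_mul,
      Matrix.conjTranspose_conjTranspose, ← hMb]
  · -- nonneg
    intro y
    set w : (Fin n₁ ⊕ Fin n₂) → ℂ := B₁ *ᵥ (Y *ᵥ y) with hwdef
    set v : (Fin n₁ ⊕ Fin n₂) → ℂ := B₂ *ᵥ y with hvdef
    have hperp : B₁ᴴ *ᵥ (v - w) = 0 := by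
      simp only [hvdef, hwdef, Matrix.mulVec_sub, Matrix.mulVec_mulVec]
      rw [← hMab, ← Matrix.mul_assoc, ← hMa, hY, sub_self]
    have hwd : star w ⬝ᵥ (v - w) = 0 := by
      rw [hwdef, Matrix.star_mulVec, ← Matrix.dotProduct_mulVec, ← hwdef, hperp,
        dotProduct_zero]
    have h1 : star y ⬝ᵥ (M_b *ᵥ y) = star v ⬝ᵥ v := by
      rw [hMb, ← Matrix.mulVec_mulVec, Matrix.dotProduct_mulVec, Matrix.vecMul_conjTranspose,
        star_star, hvdef]
    have h2 : star y ⬝ᵥ (((R_a * Y)ᴴ * (R_a * Y)) *ᵥ y) = star w ⬝ᵥ w := by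
      have hrw : (R_a * Y)ᴴ * (R_a * Y) = (B₁ * Y)ᴴ * (B₁ * Y) := by
        rw [Matrix.conjTranspose_mul, Matrix.conjTranspose_mul, Matrix.mul_assoc,
          Matrix.mul_assoc, ← Matrix.mul_assoc R_aᴴ, ← hRa, ← Matrix.mul_assoc B₁ᴴ, ← hMa]
      rw [hrw, ← Matrix.mulVec_mulVec, Matrix.dotProduct_mulVec, Matrix.vecMul_conjTranspose,
        star_star, hwdef, Matrix.mulVec_mulVec]
    have := dot_helper v w hwd
    rw [Matrix.sub_mulVec, dotProduct_sub, h1, h2]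
    exact this

theorem psd_diag_nonneg {m : Type*} [Fintype m] [DecidableEq m] {A : Matrix m m ℂ}
    (hA : A.PosSemidef) (i : m) : 0 ≤ A i i := by
  have := hA.dotProduct_mulVec_nonneg (Pi.single i 1)
  simpa [dotProduct, Matrix.mulVec, Pi.single_apply, Finset.sum_ite_eq] using this

theorem psd_cholesky : ∀ (n : ℕ) (S : Matrix (Fin n) (Fin n) ℂ), S.PosSemidef →
    ∃ R : Matrix (Fin n) (Fin n) ℂ, (∀ i j : Fin n, j < i → R i j = 0) ∧ S = Rᴴ * R := by
  intro n
  induction n with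
  | zero =>
    intro S _
    exact ⟨0, fun i => i.elim0, by ext i j; exact i.elim0⟩
  | succ n ih =>
    intro S hS
    set e : Fin 1 ⊕ Fin n ≃ Fin (n + 1) :=
      finSumFinEquiv.trans (finCongr (Nat.add_comm 1 n)) with hedef
    have hS' : (S.submatrix e e).PosSemidef := hS.submatrix e
    set S' := S.submatrix e e with hS'def
    have hherm : S'.toBlocks₂₁ = S'.toBlocks₁₂ᴴ := by
      ext i j
      have h := congrFun (congrFun hS'.1 (Sum.inr i)) (Sum.inl j)
      simpa [Matrix.toBlocks₂₁, Matrix.toBlocks₁₂, Matrix.conjTranspose_apply] using h.symm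
    have hblocks : S' = Matrix.fromBlocks S'.toBlocks₁₁ S'.toBlocks₁₂
        (S'.toBlocks₁₂)ᴴ S'.toBlocks₂₂ := by
      rw [← hherm]; exact (Matrix.fromBlocks_toBlocks S').symm
    -- the 1×1 top-left block
    set a : ℝ := Real.sqrt (S'.toBlocks₁₁ 0 0).re with hadef
    set Ra1 : Matrix (Fin 1) (Fin 1) ℂ := Matrix.of (fun _ _ => (a : ℂ)) with hRa1def
    have hα : 0 ≤ S' (Sum.inl 0) (Sum.inl 0) := psd_diag_nonneg hS' _
    have hre : 0 ≤ (S'.toBlocks₁₁ 0 0).re ∧ (S'.toBlocks₁₁ 0 0).im = 0 := by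
      rw [Complex.le_def] at hα
      exact ⟨by simpa [Matrix.toBlocks₁₁] using hα.1, by simpa [Matrix.toBlocks₁₁] using hα.2.symm⟩
    have hRa1 : S'.toBlocks₁₁ = Ra1ᴴ * Ra1 := by
      ext i j
      rw [Subsingleton.elim i 0, Subsingleton.elim j 0]
      simp only [Matrix.mul_apply, Fin.sum_univ_one, Matrix.conjTranspose_apply, hRa1def,
        Matrix.of_apply]
      rw [Complex.star_def, Complex.conj_ofReal, ← Complex.ofReal_mul, Real.mul_self_sqrt hre.1]
      rw [Complex.ext_iff]
      constructor
      · simp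
      · simp [hre.2, Complex.conj_re]
    have hMblk : (Matrix.fromBlocks S'.toBlocks₁₁ S'.toBlocks₁₂ (S'.toBlocks₁₂)ᴴ
        S'.toBlocks₂₂).PosSemidef := by rw [← hblocks]; exact hS'
    obtain ⟨R_ab, S₂, h1, h2, h3⟩ :=
      core_completion S'.toBlocks₁₁ S'.toBlocks₁₂ S'.toBlocks₂₂ hMblk Ra1 hRa1
    obtain ⟨R', htri', hfac'⟩ := ih S₂ h2
    set T : Matrix (Fin 1 ⊕ Fin n) (Fin 1 ⊕ Fin n) ℂ :=
      Matrix.fromBlocks Ra1 R_ab 0 R' with hTdef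
    have hT : S' = Tᴴ * T := by
      rw [hTdef, Matrix.fromBlocks_conjTranspose, Matrix.fromBlocks_multiply]
      rw [hblocks, hRa1, h1, h3, hfac', Matrix.conjTranspose_mul,
        Matrix.conjTranspose_conjTranspose]
      simp only [Matrix.conjTranspose_zero, Matrix.zero_mul, Matrix.mul_zero, add_zero]
    refine ⟨T.submatrix e.symm e.symm, ?_, ?_⟩
    · intro i j hlt
      rw [Matrix.submatrix_apply]
      rcases hi : e.symm i with x | x <;> rcases hj : e.symm j with y | y
      · -- i corresponds to inl, so i = 0, j < i impossible
        exfalso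
        have hi' : i = e (Sum.inl x) := by rw [← hi, Equiv.apply_symm_apply]
        have : (i : ℕ) = 0 := by
          rw [hi']; simp [hedef, Fin.ext_iff, Subsingleton.elim x 0]
        exact absurd (Fin.lt_iff_val_lt_val.mp hlt) (by omega)
      · exfalso
        have hi' : i = e (Sum.inl x) := by rw [← hi, Equiv.apply_symm_apply]
        have : (i : ℕ) = 0 := by
          rw [hi']; simp [hedef, Fin.ext_iff, Subsingleton.elim x 0]
        exact absurd (Fin.lt_iff_val_lt_val.mp hlt) (by omega)
      · simp [hTdef]
      · have hi' : i = e (Sum.inr x) := by rw [← hi, Equiv.apply_symm_apply]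
        have hj' : j = e (Sum.inr y) := by rw [← hj, Equiv.apply_symm_apply]
        have hiv : (i : ℕ) = 1 + x := by rw [hi']; simp [hedef, Nat.add_comm]
        have hjv : (j : ℕ) = 1 + y := by rw [hj']; simp [hedef, Nat.add_comm]
        have : y < x := by
          have := Fin.lt_iff_val_lt_val.mp hlt
          rw [hiv, hjv] at this
          exact Fin.lt_iff_val_lt_val.mpr (by omega)
        simpa [hTdef] using htri' x y this
    · have key : (Tᴴ * T).submatrix e.symm e.symm = S := by
        rw [← hT, hS'def, Matrix.submatrix_submatrix]
        simp
      rw [← key, ← Matrix.submatrix_mul_equiv Tᴴ T e.symm (e.symm : Fin (n+1) ≃ (Fin 1 ⊕ Fin n)) e.symm,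
        Matrix.conjTranspose_submatrix]

/-- Any given Gram factorization of the top-left block of a positive semidefinite
matrix can be completed to a block upper triangular Gram factorization. -/
theorem cholesky_completion (n₁ n₂ : ℕ)
    (M_a : Matrix (Fin n₁) (Fin n₁) ℂ)
    (M_ab : Matrix (Fin n₁) (Fin n₂) ℂ)
    (M_b : Matrix (Fin n₂) (Fin n₂) ℂ)
    (hM : (Matrix.fromBlocks M_a M_ab M_abᴴ M_b).PosSemidef)
    (R_a : Matrix (Fin n₁) (Fin n₁) ℂ)
    (hRa : M_a = R_aᴴ * R_a) :
    ∃ (R_ab : Matrix (Fin n₁) (Fin n₂) ℂ) (R_b : Matrix (Fin n₂) (Fin n₂) ℂ),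
      (∀ i j : Fin n₂, j < i → R_b i j = 0) ∧
      Matrix.fromBlocks M_a M_ab M_abᴴ M_b =
        (Matrix.fromBlocks R_a R_ab 0 R_b)ᴴ * (Matrix.fromBlocks R_a R_ab 0 R_b) := by
  obtain ⟨R_ab, S, h1, h2, h3⟩ := core_completion M_a M_ab M_b hM R_a hRa
  obtain ⟨R_b, htri, hfac⟩ := psd_cholesky n₂ S h2
  refine ⟨R_ab, R_b, htri, ?_⟩
  rw [Matrix.fromBlocks_conjTranspose, Matrix.fromBlocks_multiply]
  simp only [Matrix.conjTranspose_zero, Matrix.zero_mul, Matrix.mul_zero, add_zero]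
  rw [hRa, h1, h3, hfac, Matrix.conjTranspose_mul, Matrix.conjTranspose_conjTranspose]
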